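/- Let α > 0 and let ω ∈ ℂ satisfy Re ω > 0 and Im ω ≥ 0. Then |3ω + iα| > |ω − iα|; consequently, for every L > 0, |e^{−ωL}| < 1 < |(3ω + iα)/(ω − iα)|, and in particular e^{−ωL} ≠ (3ω + iα)/(ω − iα). -/

import Mathlib

open Complex

/-- For `α > 0` and `ω ∈ ℂ` with `Re ω > 0`, `Im ω ≥ 0`, one has `|3ω + iα| > |ω − iα|`;
consequently, for every `L > 0`, `|e^{−ωL}| < 1 < |(3ω + iα)/(ω − iα)|`, and in particular
`e^{−ωL} ≠ (3ω + iα)/(ω − iα)`. -/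
theorem modulus_estimate (α : ℝ) (hα : 0 < α) (ω : ℂ) (hre : 0 < ω.re) (him : 0 ≤ ω.im) :
    ‖ω - Complex.I * (α : ℂ)‖ < ‖3 * ω + Complex.I * (α : ℂ)‖ ∧
    ∀ L : ℝ, 0 < L →
      ‖Complex.exp (-ω * L)‖ < 1 ∧
      1 < ‖(3 * ω + Complex.I * (α : ℂ)) / (ω - Complex.I * (α : ℂ))‖ ∧
      Complex.exp (-ω * L) ≠ (3 * ω + Complex.I * (α : ℂ)) / (ω - Complex.I * (α : ℂ)) := by
  have hsq : (‖ω - Complex.I * (α : ℂ)‖)^2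
      < (‖3 * ω + Complex.I * (α : ℂ)‖)^2 := by
    rw [Complex.sq_norm, Complex.sq_norm, Complex.normSq_apply, Complex.normSq_apply]
    simp only [Complex.sub_re, Complex.sub_im, Complex.add_re, Complex.add_im,
      Complex.mul_re, Complex.mul_im, Complex.I_re, Complex.I_im, Complex.ofReal_re,
      Complex.ofReal_im, Complex.re_ofNat, Complex.im_ofNat]
    ring_nf
    nlinarith [sq_nonneg ω.im, mul_nonneg him hα.le]
  have habs : ‖ω - Complex.I * (α : ℂ)‖ < ‖3 * ω + Complex.I * (α : ℂ)‖ :=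
    lt_of_pow_lt_pow_left₀ 2 (norm_nonneg _) hsq
  have hden : 0 < ‖ω - Complex.I * (α : ℂ)‖ := by
    rw [norm_pos_iff]
    intro h
    have : (ω - Complex.I * (α : ℂ)).re = 0 := by rw [h]; simp
    simp [Complex.sub_re, Complex.mul_re] at this
    linarith
  refine ⟨habs, fun L hL => ?_⟩
  have hexp : ‖Complex.exp (-ω * L)‖ < 1 := by
    rw [Complex.norm_exp]
    apply Real.exp_lt_one_iff.mpr
    simp only [Complex.neg_re, Complex.mul_re, Complex.ofReal_re, Complex.ofReal_im]
    nlinarith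
  have hquot : 1 < ‖(3 * ω + Complex.I * (α : ℂ)) / (ω - Complex.I * (α : ℂ))‖ := by
    rw [norm_div]
    rw [lt_div_iff₀ hden, one_mul]
    exact habs
  exact ⟨hexp, hquot, fun h => by rw [h] at hexp; linarith⟩
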